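/- Let E : {0,1}^n × {0,1}^d → {0,1}^m be a (k, ε)-extractor and let B ⊆ {0,1}^n. Define POOR to be the set of left nodes u such that more than a 2ε fraction of the seeds w ∈ {0,1}^d satisfy that E(u,w) is ε-heavy for B. Then |POOR| < 2^k. -/

import Mathlib

open Finset

/-- Number of edges (counted with seed multiplicity) from the set `B` of left nodes
into the right node `p`, in the bipartite graph of `E`. -/
def edgesInto {n d m : ℕ} (E : (Fin n → Bool) → (Fin d → Bool) → (Fin m → Bool))
    (B : Finset (Fin n → Bool)) (p : Fin m → Bool) : ℕ :=
  (Finset.univ.filter fun uw : (Fin n → Bool) × (Fin d → Bool) =>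
      uw.1 ∈ B ∧ E uw.1 uw.2 = p).card

/-- A right node `p` is `ε`-heavy for `B` if it has more than `(1/ε)·avg` left
neighbors in `B`, where `avg = |B|·2^d/2^m`. -/
def IsHeavy {n d m : ℕ} (E : (Fin n → Bool) → (Fin d → Bool) → (Fin m → Bool))
    (B : Finset (Fin n → Bool)) (ε : ℚ) (p : Fin m → Bool) : Prop :=
  ε⁻¹ * ((B.card : ℚ) * 2 ^ d / 2 ^ m) < (edgesInto E B p : ℚ)

/-- `E` is a `(k, ε)`-extractor: for every set `T` of at least `2^k` left nodes and every
set `A` of right nodes, `|Prob[E(U_T, U_d) ∈ A] − |A|/2^m| < ε`. -/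
def IsExtractor {n d m : ℕ} (E : (Fin n → Bool) → (Fin d → Bool) → (Fin m → Bool))
    (k : ℕ) (ε : ℚ) : Prop :=
  ∀ T : Finset (Fin n → Bool), 2 ^ k ≤ T.card →
    ∀ A : Finset (Fin m → Bool),
      |(((Finset.univ.filter fun uw : (Fin n → Bool) × (Fin d → Bool) =>
            uw.1 ∈ T ∧ E uw.1 uw.2 ∈ A).card : ℚ) / ((T.card : ℚ) * 2 ^ d))
        - (A.card : ℚ) / 2 ^ m| < ε

/- STATEMENT 6: If `E : {0,1}^n × {0,1}^d → {0,1}^m` is a `(k, ε)`-extractor and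
`B ⊆ {0,1}^n`, then the set POOR of left nodes `u` such that more than a `2ε` fraction of
the seeds `w` give an `ε`-heavy right node `E(u,w)` has size less than `2^k`. -/
open Classical in
theorem stmt6 (n d m k : ℕ) (E : (Fin n → Bool) → (Fin d → Bool) → (Fin m → Bool))
    (ε : ℚ) (hε : 0 < ε) (hE : IsExtractor E k ε) (B : Finset (Fin n → Bool)) :
    (Finset.univ.filter fun u : Fin n → Bool =>
        2 * ε * 2 ^ d <
          ((Finset.univ.filter fun w : Fin d → Bool => IsHeavy E B ε (E u w)).card : ℚ)).card
      < 2 ^ k := by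
  by_contra hcon
  push_neg at hcon
  set POOR := (Finset.univ.filter fun u : Fin n → Bool =>
        2 * ε * 2 ^ d <
          ((Finset.univ.filter fun w : Fin d → Bool => IsHeavy E B ε (E u w)).card : ℚ))
    with hPOOR
  set A := (Finset.univ.filter fun p : Fin m → Bool => IsHeavy E B ε p) with hA
  have h2m : (0:ℚ) < 2 ^ m := by positivity
  have h2d : (0:ℚ) < 2 ^ d := by positivity
  -- total number of edges out of B
  have hs : (Finset.univ.filter fun uw : (Fin n → Bool) × (Fin d → Bool) => uw.1 ∈ B)
      = B ×ˢ Finset.univ := by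
    ext uw; simp
  have htotal : (Finset.univ.filter fun uw : (Fin n → Bool) × (Fin d → Bool) =>
      uw.1 ∈ B).card = B.card * 2 ^ d := by
    rw [hs, Finset.card_product, Finset.card_univ]
    congr 1
    simp [Fintype.card_fun]
  have hfib := Finset.card_eq_sum_card_fiberwise
      (s := Finset.univ.filter fun uw : (Fin n → Bool) × (Fin d → Bool) => uw.1 ∈ B)
      (t := Finset.univ) (f := fun uw => E uw.1 uw.2) (fun x _ => Finset.mem_univ _)
  have hsum : ∑ p : Fin m → Bool, edgesInto E B p = B.card * 2 ^ d := by
    rw [← htotal, hfib]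
    refine Finset.sum_congr rfl fun p _ => ?_
    rw [edgesInto, Finset.filter_filter]
  -- Claim 1 : |A|/2^m ≤ ε
  have hAcard : (A.card : ℚ) / 2 ^ m ≤ ε := by
    rcases Finset.eq_empty_or_nonempty A with hAe | hAne
    · rw [hAe]
      simp
      positivity
    · have hBpos : 0 < B.card := by
        by_contra hB
        push_neg at hB
        interval_cases h : B.card
        obtain ⟨p, hp⟩ := hAne
        rw [hA, Finset.mem_filter] at hp
        have hheavy := hp.2
        rw [IsHeavy] at hheavy
        have hedge : edgesInto E B p = 0 := by
          rw [edgesInto, Finset.card_eq_zero]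
          ext uw
          simp only [Finset.mem_filter, Finset.mem_univ, true_and, Finset.notMem_empty,
            iff_false, not_and]
          intro hu
          exact absurd (Finset.card_pos.mpr ⟨uw.1, hu⟩) (by omega)
        rw [hedge] at hheavy
        simp [h] at hheavy
      have h1 : (A.card : ℚ) * (ε⁻¹ * ((B.card : ℚ) * 2 ^ d / 2 ^ m))
          ≤ ∑ p ∈ A, (edgesInto E B p : ℚ) := by
        have := Finset.card_nsmul_le_sum A (fun p => (edgesInto E B p : ℚ))
          (ε⁻¹ * ((B.card : ℚ) * 2 ^ d / 2 ^ m))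
          (fun p hp => le_of_lt (by rw [hA, Finset.mem_filter] at hp; exact hp.2))
        simpa [nsmul_eq_mul] using this
      have h2 : ∑ p ∈ A, (edgesInto E B p : ℚ) ≤ (B.card : ℚ) * 2 ^ d := by
        calc ∑ p ∈ A, (edgesInto E B p : ℚ)
            ≤ ∑ p : Fin m → Bool, (edgesInto E B p : ℚ) :=
              Finset.sum_le_sum_of_subset_of_nonneg (Finset.subset_univ _)
                (fun p _ _ => by positivity)
          _ = (B.card : ℚ) * 2 ^ d := by
              rw [← Nat.cast_sum, hsum]; push_cast; ring
      have hle := h1.trans h2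
      -- from (Ac * ε⁻¹ / 2^m) * (Bc * 2^d) ≤ 1 * (Bc * 2^d)
      have hBd : (0:ℚ) < (B.card : ℚ) * 2 ^ d := by positivity
      have h3 : (A.card : ℚ) * ε⁻¹ / 2 ^ m ≤ 1 := by
        have : ((A.card : ℚ) * ε⁻¹ / 2 ^ m) * ((B.card : ℚ) * 2 ^ d)
            ≤ 1 * ((B.card : ℚ) * 2 ^ d) := by
          calc ((A.card : ℚ) * ε⁻¹ / 2 ^ m) * ((B.card : ℚ) * 2 ^ d)
              = (A.card : ℚ) * (ε⁻¹ * ((B.card : ℚ) * 2 ^ d / 2 ^ m)) := by ring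
            _ ≤ (B.card : ℚ) * 2 ^ d := hle
            _ = 1 * ((B.card : ℚ) * 2 ^ d) := by ring
        exact le_of_mul_le_mul_right this hBd
      rw [div_le_iff₀ h2m]
      have h4 : (A.card : ℚ) * ε⁻¹ ≤ 2 ^ m := by
        rw [div_le_one h2m] at h3
        exact h3
      calc (A.card : ℚ) = (A.card : ℚ) * ε⁻¹ * ε := by
            field_simp
        _ ≤ 2 ^ m * ε := by
            exact mul_le_mul_of_nonneg_right h4 (le_of_lt hε)
        _ = ε * 2 ^ m := by ring
  -- Claim 2 : probability on POOR is large
  have hTpos : 0 < POOR.card := lt_of_lt_of_le (by positivity : 0 < 2 ^ k) hcon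
  have hTne : POOR.Nonempty := Finset.card_pos.mp hTpos
  have hNsum : ((Finset.univ.filter fun uw : (Fin n → Bool) × (Fin d → Bool) =>
        uw.1 ∈ POOR ∧ E uw.1 uw.2 ∈ A).card)
      = ∑ u ∈ POOR, (Finset.univ.filter fun w => E u w ∈ A).card := by
    rw [Finset.card_eq_sum_card_fiberwise (f := Prod.fst) (t := POOR)
      (fun x hx => (Finset.mem_filter.mp hx).2.1)]
    refine Finset.sum_congr rfl fun u hu => ?_
    rw [Finset.filter_filter]
    refine Finset.card_bij (fun uw _ => uw.2) ?_ ?_ ?_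
    · intro uw huw
      simp only [Finset.mem_filter, Finset.mem_univ, true_and] at huw ⊢
      rw [← huw.2]
      exact huw.1.2
    · intro a ha b hb hab
      simp only [Finset.mem_filter, Finset.mem_univ, true_and] at ha hb
      exact Prod.ext (ha.2.trans hb.2.symm) hab
    · intro w hw
      simp only [Finset.mem_filter, Finset.mem_univ, true_and] at hw ⊢
      exact ⟨(u, w), ⟨⟨hu, hw⟩, rfl⟩, rfl⟩
  have hmemA : ∀ u, (Finset.univ.filter fun w => E u w ∈ A)
      = (Finset.univ.filter fun w : Fin d → Bool => IsHeavy E B ε (E u w)) := by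
    intro u; ext w; simp [hA]
  have hNlt : (POOR.card : ℚ) * (2 * ε * 2 ^ d)
      < ((Finset.univ.filter fun uw : (Fin n → Bool) × (Fin d → Bool) =>
        uw.1 ∈ POOR ∧ E uw.1 uw.2 ∈ A).card : ℚ) := by
    rw [hNsum]
    push_cast
    calc (POOR.card : ℚ) * (2 * ε * 2 ^ d) = ∑ _u ∈ POOR, (2 * ε * 2 ^ d) := by
          rw [Finset.sum_const, nsmul_eq_mul]
      _ < ∑ u ∈ POOR, ((Finset.univ.filter fun w => E u w ∈ A).card : ℚ) := by
          refine Finset.sum_lt_sum_of_nonempty hTne fun u hu => ?_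
          rw [hmemA u]
          exact (Finset.mem_filter.mp hu).2
  have hProb : 2 * ε < ((Finset.univ.filter fun uw : (Fin n → Bool) × (Fin d → Bool) =>
        uw.1 ∈ POOR ∧ E uw.1 uw.2 ∈ A).card : ℚ) / ((POOR.card : ℚ) * 2 ^ d) := by
    rw [lt_div_iff₀ (by positivity)]
    calc 2 * ε * ((POOR.card : ℚ) * 2 ^ d) = (POOR.card : ℚ) * (2 * ε * 2 ^ d) := by ring
      _ < _ := hNlt
  have hext := hE POOR hcon A
  have habs := le_abs_self
    ((((Finset.univ.filter fun uw : (Fin n → Bool) × (Fin d → Bool) =>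
        uw.1 ∈ POOR ∧ E uw.1 uw.2 ∈ A).card : ℚ) / ((POOR.card : ℚ) * 2 ^ d))
      - (A.card : ℚ) / 2 ^ m)
  linarith
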